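/- Let g : ℝᵈ → ℝ ∪ {+∞} be convex with g(0) = 0. Then there exists a linear extended function f : ℝᵈ → ℝ̄ with f(z) ≤ g(z) for all z ∈ ℝᵈ. -/

import Mathlib

open Pointwise


/-- A *linear extended function*: scaling and additivity whenever the sum is legal. -/
def IsLinExt {E : Type*} [AddCommGroup E] [Module ℝ E] (f : E → EReal) : Prop :=
  (∀ (α : ℝ) (x : E), f (α • x) = (α : EReal) * f x) ∧
  (∀ x x' : E, ¬ ((f x = ⊤ ∧ f x' = ⊥) ∨ (f x = ⊥ ∧ f x' = ⊤)) →
    f (x + x') = f x + f x')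

/-- An *affine extended function*: a horizontally and vertically shifted linear extended fn. -/
def IsAffExt {E : Type*} [AddCommGroup E] [Module ℝ E] (h : E → EReal) : Prop :=
  ∃ (f : E → EReal) (x₀ : E) (β : ℝ), IsLinExt f ∧ ∀ x, h x = f (x - x₀) + (β : EReal)

private lemma isClosed_addGraph : IsClosed {p : EReal × EReal × EReal |
    (p.2.1 = ⊤ ∧ p.2.2 = ⊥) ∨ (p.2.1 = ⊥ ∧ p.2.2 = ⊤) ∨ p.1 = p.2.1 + p.2.2} := by
  rw [← isOpen_compl_iff, isOpen_iff_mem_nhds]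
  rintro ⟨a, b, c⟩ hp
  simp only [Set.mem_compl_iff, Set.mem_setOf_eq, not_or] at hp
  obtain ⟨h1, h2, h3⟩ := hp
  have hb1 : b ≠ ⊤ ∨ c ≠ ⊥ := by tauto
  have hb2 : b ≠ ⊥ ∨ c ≠ ⊤ := by tauto
  have hadd : ContinuousAt (fun q : EReal × EReal × EReal => q.2.1 + q.2.2) (a, b, c) := by
    have h := EReal.continuousAt_add (p := (b, c)) hb1 hb2
    exact ContinuousAt.comp (g := fun r : EReal × EReal => r.1 + r.2)
      (f := (Prod.snd : EReal × EReal × EReal → EReal × EReal)) h continuous_snd.continuousAt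
  have hne : ContinuousAt (fun q : EReal × EReal × EReal => (q.1, q.2.1 + q.2.2)) (a, b, c) :=
    continuous_fst.continuousAt.prodMk hadd
  have hmem3 : {q : EReal × EReal × EReal | q.1 ≠ q.2.1 + q.2.2} ∈ nhds (a, b, c) := by
    have hopen : IsOpen {r : EReal × EReal | r.1 ≠ r.2} :=
      isOpen_ne_fun continuous_fst continuous_snd
    exact hne.preimage_mem_nhds (hopen.mem_nhds h3)
  have hopen1 : ∀ (u v : EReal), IsOpen {q : EReal × EReal × EReal | ¬(q.2.1 = u ∧ q.2.2 = v)} := by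
    intro u v
    have he : {q : EReal × EReal × EReal | ¬(q.2.1 = u ∧ q.2.2 = v)} =
        (fun q : EReal × EReal × EReal => (q.2.1, q.2.2)) ⁻¹' {(u, v)}ᶜ := by
      ext q; simp [Prod.ext_iff]
    rw [he]
    exact (isClosed_singleton.isOpen_compl).preimage
      ((continuous_fst.comp continuous_snd).prodMk (continuous_snd.comp continuous_snd))
  have hmem1 : {q : EReal × EReal × EReal | ¬(q.2.1 = ⊤ ∧ q.2.2 = ⊥)} ∈ nhds (a, b, c) :=
    (hopen1 ⊤ ⊥).mem_nhds h1
  have hmem2 : {q : EReal × EReal × EReal | ¬(q.2.1 = ⊥ ∧ q.2.2 = ⊤)} ∈ nhds (a, b, c) :=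
    (hopen1 ⊥ ⊤).mem_nhds h2
  filter_upwards [hmem1, hmem2, hmem3] with q hq1 hq2 hq3
  simp only [Set.mem_compl_iff, Set.mem_setOf_eq, not_or]
  exact ⟨hq1, hq2, hq3⟩

/-- The finitely many ε-relaxed constraints admit an honest linear functional solution. -/
private lemma exists_lin_minorant (d : ℕ) (g : (Fin d → ℝ) → EReal) (hbot : ∀ x, g x ≠ ⊥)
    (hconv : Convex ℝ {p : (Fin d → ℝ) × ℝ | g p.1 ≤ (p.2 : EReal)})
    (h0 : g 0 = 0) (s : Finset ((Fin d → ℝ) × ℝ)) :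
    ∃ ℓ : (Fin d → ℝ) →ₗ[ℝ] ℝ, ∀ p ∈ s, 0 < p.2 →
      ((ℓ p.1 : ℝ) : EReal) ≤ g p.1 + (p.2 : EReal) := by
  classical
  set s' := s.filter (fun p => 0 < p.2 ∧ g p.1 ≠ ⊤) with hs'def
  suffices h : ∃ ℓ : (Fin d → ℝ) →ₗ[ℝ] ℝ, ∀ p ∈ s',
      ((ℓ p.1 : ℝ) : EReal) ≤ g p.1 + (p.2 : EReal) by
    obtain ⟨ℓ, hℓ⟩ := h
    refine ⟨ℓ, fun p hp hp2 => ?_⟩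
    by_cases htop : g p.1 = ⊤
    · rw [htop, EReal.top_add_coe]; exact le_top
    · exact hℓ p (Finset.mem_filter.2 ⟨hp, hp2, htop⟩)
  rcases Finset.eq_empty_or_nonempty s' with hemp | hne'
  · exact ⟨0, fun p hp => absurd hp (by simp [hemp])⟩
  set ε₀ := s'.inf' hne' (fun p => p.2) with hε₀def
  have hε₀ : 0 < ε₀ := by
    rw [hε₀def, Finset.lt_inf'_iff]
    exact fun p hp => (Finset.mem_filter.1 hp).2.1
  set pts := s'.image (fun p => (p.1, (g p.1).toReal)) with hptsdef
  set K := convexHull ℝ (pts : Set ((Fin d → ℝ) × ℝ)) with hKdef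
  have hKS : K ⊆ {p : (Fin d → ℝ) × ℝ | g p.1 ≤ (p.2 : EReal)} := by
    apply convexHull_min _ hconv
    rintro q hq
    simp only [Finset.coe_image, Set.mem_image, Finset.mem_coe, hptsdef] at hq
    obtain ⟨p, hp, rfl⟩ := hq
    have hmf := Finset.mem_filter.1 hp
    simp only [Set.mem_setOf_eq]
    rw [EReal.coe_toReal hmf.2.2 (hbot p.1)]
  set ray : Set ((Fin d → ℝ) × ℝ) := {(0 : Fin d → ℝ)} ×ˢ Set.Ici (0 : ℝ) with hraydef
  have hrayclosed : IsClosed ray := isClosed_singleton.prod isClosed_Ici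
  have hrayconv : Convex ℝ ray := (convex_singleton _).prod (convex_Ici _)
  set C := K + ray with hCdef
  have hCclosed : IsClosed C :=
    hrayclosed.add_left_of_isCompact (pts.finite_toSet.isCompact_convexHull ℝ)
  have hCconv : Convex ℝ C := (convex_convexHull ℝ _).add hrayconv
  have hx₀ : ((0 : Fin d → ℝ), -ε₀) ∉ C := by
    intro hmem
    rw [hCdef, Set.mem_add] at hmem
    obtain ⟨k, hk, q, hq, hkq⟩ := hmem
    rw [hraydef, Set.mem_prod, Set.mem_singleton_iff] at hq
    have hk1 : k.1 = 0 := by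
      have h := congrArg Prod.fst hkq
      simp only [Prod.fst_add, hq.1, add_zero] at h
      exact h
    have hk2 : (0 : ℝ) ≤ k.2 := by
      have h := hKS hk
      rw [Set.mem_setOf_eq, hk1, h0] at h
      exact_mod_cast h
    have h2 := congrArg Prod.snd hkq
    simp only [Prod.snd_add] at h2
    have := hq.2
    simp only [Set.mem_Ici] at this
    linarith
  obtain ⟨ψ, u, hψC, hψx⟩ := geometric_hahn_banach_closed_point hCconv hCclosed hx₀
  have hray0 : ((0 : Fin d → ℝ), (0 : ℝ)) ∈ ray := by
    rw [hraydef]; exact Set.mem_prod.2 ⟨Set.mem_singleton _, Set.mem_Ici.2 (le_refl 0)⟩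
  have hKC : K ⊆ C := fun k hk => by
    have := Set.add_mem_add hk hray0
    rw [show ((0 : Fin d → ℝ), (0 : ℝ)) = 0 from rfl, add_zero] at this; exact this
  have hne'' := hne'
  obtain ⟨p₀, hp₀⟩ := hne''
  have hk₀ : (p₀.1, (g p₀.1).toReal) ∈ K :=
    subset_convexHull ℝ _ (Finset.mem_coe.2 (Finset.mem_image_of_mem _ hp₀))
  set β := ψ ((0 : Fin d → ℝ), (1 : ℝ)) with hβdef
  have hβ : β ≤ 0 := by
    by_contra hβ'
    push_neg at hβ'
    set k₀ := ((p₀.1, (g p₀.1).toReal) : (Fin d → ℝ) × ℝ) with hk₀def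
    have key : ∀ t : ℝ, 0 ≤ t → ψ k₀ + t * β < u := by
      intro t ht
      have hmemray : ((0 : Fin d → ℝ), t) ∈ ray := by
        rw [hraydef]; exact Set.mem_prod.2 ⟨Set.mem_singleton _, Set.mem_Ici.2 ht⟩
      have hmem : k₀ + ((0 : Fin d → ℝ), t) ∈ C := Set.add_mem_add hk₀ hmemray
      have h := hψC _ hmem
      have hdecomp : ((0 : Fin d → ℝ), t) = t • ((0 : Fin d → ℝ), (1 : ℝ)) := by
        ext <;> simp
      rwa [hdecomp, map_add, map_smul, smul_eq_mul] at h
    set tt := max ((u - ψ k₀) / β + 1) 0 with htt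
    have h1 := key tt (le_max_right _ _)
    have h2 : ((u - ψ k₀) / β + 1) * β ≤ tt * β :=
      mul_le_mul_of_nonneg_right (le_max_left _ _) hβ'.le
    rw [add_mul, div_mul_cancel₀ _ (ne_of_gt hβ'), one_mul] at h2
    linarith
  have hdecomp : ∀ (z : Fin d → ℝ) (r : ℝ), ψ (z, r) = ψ (z, 0) + r * β := by
    intro z r
    have h : ((z, r) : (Fin d → ℝ) × ℝ) = (z, (0 : ℝ)) + r • ((0 : Fin d → ℝ), (1 : ℝ)) := by
      ext <;> simp
    rw [h, map_add, map_smul, smul_eq_mul]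
  have hcons : ∀ p ∈ s', ψ (p.1, 0) + (g p.1).toReal * β < u := by
    intro p hp
    have hmem : ((p.1, (g p.1).toReal) : (Fin d → ℝ) × ℝ) ∈ C :=
      hKC (subset_convexHull ℝ _ (Finset.mem_coe.2 (Finset.mem_image_of_mem _ hp)))
    have h := hψC _ hmem
    rwa [hdecomp] at h
  have hψx' : u < ε₀ * (-β) := by
    have h : ψ ((0 : Fin d → ℝ), -ε₀) = -ε₀ * β := by
      rw [hdecomp]
      have : ψ ((0 : Fin d → ℝ), (0 : ℝ)) = 0 := by
        have : ((0 : Fin d → ℝ), (0 : ℝ)) = (0 : (Fin d → ℝ) × ℝ) := rfl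
        rw [this, map_zero]
      rw [this, zero_add]
    rw [h] at hψx
    linarith [hψx]
  rcases eq_or_lt_of_le hβ with hβ0 | hβneg
  · -- β = 0
    have hu0 : u < 0 := by
      rw [hβ0] at hψx'
      simpa using hψx'
    set M := (s'.sup' hne' (fun p => ((g p.1).toReal + p.2) / u)) ⊔ 0 with hMdef
    refine ⟨M • ((ψ : ((Fin d → ℝ) × ℝ) →ₗ[ℝ] ℝ).comp (LinearMap.inl ℝ (Fin d → ℝ) ℝ)), ?_⟩
    intro p hp
    have hmf := Finset.mem_filter.1 hp
    have happ : (M • ((ψ : ((Fin d → ℝ) × ℝ) →ₗ[ℝ] ℝ).comp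
        (LinearMap.inl ℝ (Fin d → ℝ) ℝ))) p.1 = M * ψ (p.1, 0) := by
      simp [LinearMap.smul_apply, smul_eq_mul]
    rw [happ, ← EReal.coe_toReal hmf.2.2 (hbot p.1), ← EReal.coe_add, EReal.coe_le_coe_iff]
    have h1 : ψ (p.1, 0) < u := by
      have h := hcons p hp
      rw [hβ0] at h
      simpa using h
    have hM0 : 0 ≤ M := le_max_right _ _
    have hMu : M * ψ (p.1, 0) ≤ M * u := by
      rcases eq_or_lt_of_le hM0 with h | h
      · rw [← h]; simp
      · exact (mul_le_mul_iff_right₀ h).2 h1.le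
    have hMge : ((g p.1).toReal + p.2) / u ≤ M :=
      le_trans (Finset.le_sup' (fun p => ((g p.1).toReal + p.2) / u) hp) (le_max_left _ _)
    have hMu2 : M * u ≤ (g p.1).toReal + p.2 := by
      have := (div_le_iff_of_neg hu0).1 hMge
      linarith [this]
    linarith
  · -- β < 0
    set γ := -β with hγdef
    have hγ : 0 < γ := by rw [hγdef]; linarith
    refine ⟨γ⁻¹ • ((ψ : ((Fin d → ℝ) × ℝ) →ₗ[ℝ] ℝ).comp (LinearMap.inl ℝ (Fin d → ℝ) ℝ)), ?_⟩
    intro p hp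
    have hmf := Finset.mem_filter.1 hp
    have happ : (γ⁻¹ • ((ψ : ((Fin d → ℝ) × ℝ) →ₗ[ℝ] ℝ).comp
        (LinearMap.inl ℝ (Fin d → ℝ) ℝ))) p.1 = γ⁻¹ * ψ (p.1, 0) := by
      simp [LinearMap.smul_apply, smul_eq_mul]
    rw [happ, ← EReal.coe_toReal hmf.2.2 (hbot p.1), ← EReal.coe_add, EReal.coe_le_coe_iff]
    have h1 := hcons p hp
    have h3 : ε₀ ≤ p.2 := Finset.inf'_le _ hp
    have hβγ : β = -γ := by rw [hγdef]; ring
    have h4 : ψ (p.1, 0) < (ε₀ + (g p.1).toReal) * γ := by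
      rw [hβγ] at h1
      nlinarith [hψx']
    have h5 : γ⁻¹ * ψ (p.1, 0) < ε₀ + (g p.1).toReal := by
      rw [inv_mul_lt_iff₀ hγ]
      calc ψ (p.1, 0) < (ε₀ + (g p.1).toReal) * γ := h4
        _ = γ * (ε₀ + (g p.1).toReal) := by ring
    linarith

private def constraintSet (d : ℕ) (g : (Fin d → ℝ) → EReal) :
    ((ℝ × (Fin d → ℝ)) ⊕ ((Fin d → ℝ) × (Fin d → ℝ)) ⊕ ((Fin d → ℝ) × ℝ)) →
      Set ((Fin d → ℝ) → EReal)
  | .inl q => {f | f (q.1 • q.2) = (q.1 : EReal) * f q.2}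
  | .inr (.inl q) => {f | (f q.1 = ⊤ ∧ f q.2 = ⊥) ∨ (f q.1 = ⊥ ∧ f q.2 = ⊤) ∨
      f (q.1 + q.2) = f q.1 + f q.2}
  | .inr (.inr q) => {f | q.2 ≤ 0 ∨ f q.1 ≤ g q.1 + (q.2 : EReal)}

theorem stmt_8 (d : ℕ) (g : (Fin d → ℝ) → EReal) (hbot : ∀ x, g x ≠ ⊥)
    (hconv : Convex ℝ {p : (Fin d → ℝ) × ℝ | g p.1 ≤ (p.2 : EReal)})
    (h0 : g 0 = 0) :
    ∃ f : (Fin d → ℝ) → EReal, IsLinExt f ∧ ∀ z, f z ≤ g z := by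
  classical
  set t := constraintSet d g with htdef
  have hclosed : ∀ i, IsClosed (t i) := by
    rintro (⟨α, x⟩ | ⟨x, x'⟩ | ⟨z, ε⟩)
    · show IsClosed {f : (Fin d → ℝ) → EReal | f (α • x) = (α : EReal) * f x}
      rcases eq_or_ne α 0 with rfl | hα
      · have heq : {f : (Fin d → ℝ) → EReal | f ((0:ℝ) • x) = ((0:ℝ) : EReal) * f x} =
            {f : (Fin d → ℝ) → EReal | f 0 = 0} := by
          ext f; simp [zero_smul]
        rw [heq]
        exact isClosed_eq (continuous_apply _) continuous_const
      · have hcm : Continuous (fun b : EReal => (α : EReal) * b) := by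
          rw [continuous_iff_continuousAt]
          intro b
          have h := EReal.continuousAt_mul (p := ((α : EReal), b))
            (Or.inl (show (α : EReal) ≠ 0 by exact_mod_cast hα))
            (Or.inl (show (α : EReal) ≠ 0 by exact_mod_cast hα))
            (Or.inl (show (α : EReal) ≠ ⊥ from EReal.coe_ne_bot α))
            (Or.inl (show (α : EReal) ≠ ⊤ from EReal.coe_ne_top α))
          exact h.comp (Continuous.continuousAt (continuous_const.prodMk continuous_id))
        exact isClosed_eq (continuous_apply _) (hcm.comp (continuous_apply x))
    · show IsClosed {f : (Fin d → ℝ) → EReal | (f x = ⊤ ∧ f x' = ⊥) ∨ (f x = ⊥ ∧ f x' = ⊤) ∨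
        f (x + x') = f x + f x'}
      have hc : Continuous (fun f : (Fin d → ℝ) → EReal => (f (x + x'), f x, f x')) :=
        (continuous_apply _).prodMk ((continuous_apply _).prodMk (continuous_apply _))
      exact isClosed_addGraph.preimage hc
    · show IsClosed {f : (Fin d → ℝ) → EReal | ε ≤ 0 ∨ f z ≤ g z + (ε : EReal)}
      rcases le_or_gt ε 0 with h | h
      · have heq : {f : (Fin d → ℝ) → EReal | ε ≤ 0 ∨ f z ≤ g z + (ε : EReal)} = Set.univ :=
          Set.eq_univ_of_forall fun f => Or.inl h
        rw [heq]; exact isClosed_univ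
      · have heq : {f : (Fin d → ℝ) → EReal | ε ≤ 0 ∨ f z ≤ g z + (ε : EReal)} =
            {f : (Fin d → ℝ) → EReal | f z ≤ g z + (ε : EReal)} := by
          ext f
          simp only [Set.mem_setOf_eq, or_iff_right (not_le.2 h)]
        rw [heq]
        exact isClosed_le (continuous_apply z) continuous_const
  have hne : ∀ u : Finset ((ℝ × (Fin d → ℝ)) ⊕ ((Fin d → ℝ) × (Fin d → ℝ)) ⊕ ((Fin d → ℝ) × ℝ)),
      (Set.univ ∩ ⋂ i ∈ u, t i).Nonempty := by
    intro u
    set φm : ((ℝ × (Fin d → ℝ)) ⊕ ((Fin d → ℝ) × (Fin d → ℝ)) ⊕ ((Fin d → ℝ) × ℝ)) →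
        (Fin d → ℝ) × ℝ :=
      Sum.elim (fun _ => ((0 : Fin d → ℝ), (1 : ℝ)))
        (Sum.elim (fun _ => ((0 : Fin d → ℝ), (1 : ℝ))) id) with hφmdef
    obtain ⟨ℓ, hℓ⟩ := exists_lin_minorant d g hbot hconv h0 (u.image φm)
    refine ⟨fun z => ((ℓ z : ℝ) : EReal), Set.mem_inter (Set.mem_univ _) ?_⟩
    rw [Set.mem_iInter₂]
    rintro (⟨α, x⟩ | ⟨x, x'⟩ | ⟨z, ε⟩) hi
    · show ((ℓ (α • x) : ℝ) : EReal) = (α : EReal) * ((ℓ x : ℝ) : EReal)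
      rw [map_smul, smul_eq_mul, EReal.coe_mul]
    · refine Or.inr (Or.inr ?_)
      show ((ℓ (x + x') : ℝ) : EReal) = ((ℓ x : ℝ) : EReal) + ((ℓ x' : ℝ) : EReal)
      rw [map_add, EReal.coe_add]
    · rcases le_or_gt ε 0 with h | h
      · exact Or.inl h
      · refine Or.inr ?_
        have hmem : (z, ε) ∈ u.image φm := by
          have : φm (Sum.inr (Sum.inr (z, ε))) = (z, ε) := rfl
          rw [← this]
          exact Finset.mem_image_of_mem φm hi
        exact hℓ (z, ε) hmem h
  have hInter : (Set.univ ∩ ⋂ i, t i).Nonempty := by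
    by_contra hcon
    rw [Set.not_nonempty_iff_eq_empty] at hcon
    obtain ⟨u, hu⟩ := isCompact_univ.elim_finite_subfamily_closed t hclosed hcon
    exact (hne u).ne_empty hu
  obtain ⟨f, -, hf⟩ := hInter
  rw [Set.mem_iInter] at hf
  refine ⟨f, ⟨fun α x => hf (Sum.inl (α, x)), fun x x' hx => ?_⟩, fun z => ?_⟩
  · have h := hf (Sum.inr (Sum.inl (x, x')))
    rcases h with h | h | h
    · exact absurd (Or.inl h) hx
    · exact absurd (Or.inr h) hx
    · exact h
  · have H : ∀ ε : ℝ, 0 < ε → f z ≤ g z + (ε : EReal) := by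
      intro ε hε
      have h := hf (Sum.inr (Sum.inr (z, ε)))
      rcases h with h | h
      · linarith
      · exact h
    by_cases htop : g z = ⊤
    · rw [htop]; exact le_top
    have hgz : g z = ((g z).toReal : EReal) := (EReal.coe_toReal htop (hbot z)).symm
    set r := (g z).toReal with hrdef
    rw [hgz] at H ⊢
    refine EReal.le_of_forall_lt_iff_le.1 (fun w hw => ?_)
    have hwr : r < w := by exact_mod_cast hw
    have h := H (w - r) (by linarith)
    calc f z ≤ (r : EReal) + ((w - r : ℝ) : EReal) := h
      _ = ((r + (w - r) : ℝ) : EReal) := (EReal.coe_add _ _).symm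
      _ = (w : EReal) := by norm_num
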